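/- Let (Ω, F, P) be a probability space and let (X_n) and (Y_n) be sequences of real-valued random variables on it such that X_n ≤ Y_n almost surely for every n. Suppose that the laws of X_n and the laws of Y_n both converge weakly, as n → ∞, to the same Borel probability measure μ on ℝ. Then Y_n − X_n converges to 0 in probability: for every ε > 0, P(Y_n − X_n ≥ ε) → 0 as n → ∞. -/

import Mathlib

open MeasureTheory Filter

/-- A clamp function `t ↦ max (-c) (min c t)` as a bounded continuous function. -/
noncomputable def clampBCF (c : ℝ) (hc : 0 ≤ c) : BoundedContinuousFunction ℝ ℝ :=
  BoundedContinuousFunction.ofNormedAddCommGroup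
    (fun t => max (-c) (min c t))
    (continuous_const.max (continuous_const.min continuous_id))
    c
    (by
      intro t
      rw [Real.norm_eq_abs, abs_le]
      exact ⟨le_max_left _ _, max_le (by linarith) (min_le_left _ _)⟩)

lemma clampBCF_apply (c : ℝ) (hc : 0 ≤ c) (t : ℝ) :
    clampBCF c hc t = max (-c) (min c t) := rfl

lemma clampBCF_mono (c : ℝ) (hc : 0 ≤ c) : Monotone (clampBCF c hc) := by
  intro a b hab
  simp only [clampBCF_apply]
  exact max_le_max le_rfl (min_le_min le_rfl hab)

lemma clampBCF_eq_self (c : ℝ) (hc : 0 ≤ c) {t : ℝ} (h1 : -c ≤ t) (h2 : t ≤ c) :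
    clampBCF c hc t = t := by
  rw [clampBCF_apply, min_eq_right h2, max_eq_right h1]

/-- A continuous approximation from below of the indicator of `{x : M+1 ≤ |x|}`,
vanishing on `{x : |x| ≤ M}`. -/
noncomputable def tailBCF (M : ℝ) : BoundedContinuousFunction ℝ ℝ :=
  BoundedContinuousFunction.ofNormedAddCommGroup
    (fun x => min 1 (max 0 (|x| - M)))
    (continuous_const.min (continuous_const.max (continuous_abs.sub continuous_const)))
    1
    (by
      intro x
      rw [Real.norm_eq_abs, abs_le]
      refine ⟨?_, min_le_left _ _⟩
      have : (0:ℝ) ≤ min 1 (max 0 (|x| - M)) := le_min zero_le_one (le_max_left _ _)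
      linarith)

lemma tailBCF_nonneg (M : ℝ) (x : ℝ) : 0 ≤ tailBCF M x :=
  le_min zero_le_one (le_max_left _ _)

lemma tailBCF_le_one (M : ℝ) (x : ℝ) : tailBCF M x ≤ 1 := min_le_left _ _

lemma tailBCF_eq_one (M : ℝ) {x : ℝ} (h : M + 1 ≤ |x|) : tailBCF M x = 1 := by
  show min 1 (max 0 (|x| - M)) = 1
  rw [min_eq_left]
  exact le_max_of_le_right (by linarith)

lemma tailBCF_eq_zero (M : ℝ) {x : ℝ} (h : |x| < M) : tailBCF M x = 0 := by
  show min 1 (max 0 (|x| - M)) = 0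
  rw [max_eq_left (by linarith), min_eq_right zero_le_one]

/-- If `X n ≤ Y n` almost surely for every `n` and the laws of
`X n` and of `Y n` both converge weakly (tested against bounded continuous
functions) to the same Borel probability measure `μ` on ℝ, then `Y n − X n → 0`
in probability: for every `ε > 0`, `P(Y n − X n ≥ ε) → 0`. -/
theorem tendsto_zero_of_stochastically_ordered_same_limit
    {Ω : Type*} [MeasurableSpace Ω] (P : Measure Ω) [IsProbabilityMeasure P]
    (X Y : ℕ → Ω → ℝ)
    (hXm : ∀ n, Measurable (X n)) (hYm : ∀ n, Measurable (Y n))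
    (h_le : ∀ n, ∀ᵐ ω ∂P, X n ω ≤ Y n ω)
    (μ : Measure ℝ) [IsProbabilityMeasure μ]
    (hX : ∀ f : BoundedContinuousFunction ℝ ℝ,
      Tendsto (fun n => ∫ x, f x ∂(P.map (X n))) atTop (nhds (∫ x, f x ∂μ)))
    (hY : ∀ f : BoundedContinuousFunction ℝ ℝ,
      Tendsto (fun n => ∫ x, f x ∂(P.map (Y n))) atTop (nhds (∫ x, f x ∂μ))) :
    ∀ ε : ℝ, 0 < ε →
      Tendsto (fun n => P {ω | ε ≤ Y n ω - X n ω}) atTop (nhds 0) := by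
  intro ε hε
  rw [ENNReal.tendsto_atTop_zero]
  intro e he
  rcases eq_or_ne e ⊤ with rfl | heT
  · exact ⟨0, fun n _ => le_top⟩
  set η : ℝ := e.toReal with hηdef
  have hη0 : 0 < η := ENNReal.toReal_pos he.ne' heT
  -- Step 1: tightness of μ: choose k with μ {x | k ≤ |x|} < ofReal (η/2)
  set s : ℕ → Set ℝ := fun k => {x : ℝ | (k : ℝ) ≤ |x|} with hsdef
  have hsmeas : ∀ k, MeasurableSet (s k) :=
    fun k => measurableSet_le measurable_const measurable_abs
  have hanti : Antitone s := by
    intro a b hab x hx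
    exact le_trans (Nat.cast_le.mpr hab : (a:ℝ) ≤ b) hx
  have hiInter : ⋂ k, s k = ∅ := by
    ext x
    simp only [Set.mem_iInter, Set.mem_empty_iff_false, iff_false, not_forall]
    obtain ⟨k, hk⟩ := exists_nat_gt |x|
    exact ⟨k, by simp [hsdef, not_le.mpr hk]⟩
  have htend : Tendsto (fun k => μ (s k)) atTop (nhds 0) := by
    have := MeasureTheory.tendsto_measure_iInter_atTop
      (μ := μ) (s := s) (fun k => (hsmeas k).nullMeasurableSet) hanti
      ⟨0, measure_ne_top μ _⟩
    rwa [hiInter, measure_empty] at this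
  have hhalf : (0 : ENNReal) < ENNReal.ofReal (η / 2) := by
    simp [ENNReal.ofReal_pos]; linarith
  obtain ⟨k, hk⟩ := (htend.eventually (eventually_lt_nhds hhalf)).exists
  set M : ℝ := (k : ℝ) with hMdef
  have hM0 : 0 ≤ M := Nat.cast_nonneg k
  have hμtail : (μ (s k)).toReal < η / 2 := by
    rw [← ENNReal.ofReal_toReal (measure_ne_top μ (s k))] at hk
    exact lt_of_not_ge fun h => absurd hk (not_lt.mpr (ENNReal.ofReal_le_ofReal h))
  -- the bounded continuous functions
  set G : BoundedContinuousFunction ℝ ℝ := clampBCF (M + 2) (by linarith) with hGdef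
  set H : BoundedContinuousFunction ℝ ℝ := tailBCF M with hHdef
  set ε' : ℝ := min ε 1 with hε'def
  have hε'0 : 0 < ε' := lt_min hε one_pos
  have hε'1 : ε' ≤ 1 := min_le_right _ _
  have hε'ε : ε' ≤ ε := min_le_left _ _
  -- integrability of compositions
  have hint : ∀ (F : BoundedContinuousFunction ℝ ℝ) (Z : Ω → ℝ), Measurable Z →
      Integrable (fun ω => F (Z ω)) P := by
    intro F Z hZ
    haveI : IsProbabilityMeasure (P.map Z) := Measure.isProbabilityMeasure_map hZ.aemeasurable
    exact (integrable_map_measure F.continuous.measurable.aestronglyMeasurable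
      hZ.aemeasurable).mp (F.integrable _)
  have hmap : ∀ (F : BoundedContinuousFunction ℝ ℝ) (Z : Ω → ℝ) (hZ : Measurable Z),
      ∫ x, F x ∂(P.map Z) = ∫ ω, F (Z ω) ∂P := by
    intro F Z hZ
    exact integral_map hZ.aemeasurable F.continuous.measurable.aestronglyMeasurable
  -- Step 2: the comparison terms tend to 0
  have hD : Tendsto (fun n => (∫ x, G x ∂(P.map (Y n))) - ∫ x, G x ∂(P.map (X n)))
      atTop (nhds 0) := by
    have := (hY G).sub (hX G)
    rwa [sub_self] at this
  have hEv1 : ∀ᶠ n in atTop,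
      (∫ x, G x ∂(P.map (Y n))) - (∫ x, G x ∂(P.map (X n))) < ε' * (η / 2) :=
    hD.eventually (eventually_lt_nhds (by positivity))
  -- ∫ H dμ < η/2
  have hHμ : ∫ x, H x ∂μ < η / 2 := by
    have hle : ∫ x, H x ∂μ ≤ (μ (s k)).toReal := by
      have h1 : ∫ x, H x ∂μ ≤ ∫ x, (s k).indicator (fun _ => (1:ℝ)) x ∂μ := by
        apply integral_mono (H.integrable μ)
          ((integrable_const (1:ℝ)).indicator (hsmeas k))
        intro x
        by_cases hx : x ∈ s k
        · rw [Set.indicator_of_mem hx]; exact tailBCF_le_one M x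
        · rw [Set.indicator_of_notMem hx]
          have : |x| < M := not_le.mp hx
          rw [hHdef, tailBCF_eq_zero M this]
      rwa [integral_indicator_const (1:ℝ) (hsmeas k), smul_eq_mul, mul_one] at h1
    linarith
  have hEv2 : ∀ᶠ n in atTop, ∫ x, H x ∂(P.map (X n)) < η / 2 :=
    (hX H).eventually (eventually_lt_nhds hHμ)
  obtain ⟨N, hN⟩ := (hEv1.and hEv2).exists_forall_of_atTop
  refine ⟨N, fun n hn => ?_⟩
  obtain ⟨h1, h2⟩ := hN n hn
  -- sets
  set E : Set Ω := {ω | ε ≤ Y n ω - X n ω} with hEdef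
  set A : Set Ω := E ∩ {ω | |X n ω| ≤ M + 1} with hAdef
  set B : Set Ω := {ω | M + 1 ≤ |X n ω|} with hBdef
  have hEmeas : MeasurableSet E :=
    measurableSet_le measurable_const ((hYm n).sub (hXm n))
  have hAmeas : MeasurableSet A :=
    hEmeas.inter (measurableSet_le (measurable_abs.comp (hXm n)) measurable_const)
  have hBmeas : MeasurableSet B :=
    measurableSet_le measurable_const (measurable_abs.comp (hXm n))
  have hsub : E ⊆ A ∪ B := by
    intro ω hω
    by_cases hx : |X n ω| ≤ M + 1
    · exact Or.inl ⟨hω, hx⟩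
    · exact Or.inr (le_of_lt (not_le.mp hx))
  -- Bound on A
  have hkey : ∀ᵐ ω ∂P, A.indicator (fun _ => ε') ω ≤ G (Y n ω) - G (X n ω) := by
    filter_upwards [h_le n] with ω hω
    by_cases hA : ω ∈ A
    · rw [Set.indicator_of_mem hA]
      obtain ⟨hE, hx⟩ := hA
      have hx' : |X n ω| ≤ M + 1 := hx
      have hE' : ε ≤ Y n ω - X n ω := hE
      have habs := abs_le.mp hx'
      have hGX : G (X n ω) = X n ω :=
        clampBCF_eq_self _ _ (by linarith [habs.1]) (by linarith [habs.2])
      have hGxe : G (X n ω + ε') = X n ω + ε' :=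
        clampBCF_eq_self _ _ (by linarith [habs.1]) (by linarith [habs.2])
      have hmono : G (X n ω + ε') ≤ G (Y n ω) :=
        clampBCF_mono _ _ (by linarith)
      rw [hGxe] at hmono
      rw [hGX]
      linarith
    · rw [Set.indicator_of_notMem hA]
      have := clampBCF_mono (M + 2) (by linarith) hω
      simpa [hGdef] using sub_nonneg.mpr this
  have hintA : (P A).toReal * ε' ≤
      (∫ x, G x ∂(P.map (Y n))) - ∫ x, G x ∂(P.map (X n)) := by
    have hI : ∫ ω, A.indicator (fun _ => ε') ω ∂P ≤
        ∫ ω, (G (Y n ω) - G (X n ω)) ∂P := by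
      apply integral_mono_ae ((integrable_const ε').indicator hAmeas)
        ((hint G (Y n) (hYm n)).sub (hint G (X n) (hXm n))) hkey
    rw [integral_indicator_const ε' hAmeas, smul_eq_mul] at hI
    rw [integral_sub (hint G (Y n) (hYm n)) (hint G (X n) (hXm n))] at hI
    rw [hmap G (Y n) (hYm n), hmap G (X n) (hXm n)]
    exact hI
  have hPA : (P A).toReal ≤ η / 2 := by
    have h3 : (P A).toReal * ε' ≤ ε' * (η / 2) := le_of_lt (lt_of_le_of_lt hintA h1)
    nlinarith [ENNReal.toReal_nonneg (a := P A)]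
  have hPA' : P A ≤ ENNReal.ofReal (η / 2) :=
    (ENNReal.le_ofReal_iff_toReal_le (measure_ne_top P A) (by linarith)).mpr hPA
  -- Bound on B
  have hPB : (P B).toReal ≤ η / 2 := by
    have hI : ∫ ω, B.indicator (fun _ => (1:ℝ)) ω ∂P ≤ ∫ ω, H (X n ω) ∂P := by
      apply integral_mono ((integrable_const (1:ℝ)).indicator hBmeas)
        (hint H (X n) (hXm n))
      intro ω
      by_cases hB : ω ∈ B
      · simp only [Set.indicator_of_mem hB]
        exact (tailBCF_eq_one M hB).symm.le
      · simp only [Set.indicator_of_notMem hB]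
        exact tailBCF_nonneg M _
    rw [integral_indicator_const (1:ℝ) hBmeas, smul_eq_mul, mul_one] at hI
    rw [← hmap H (X n) (hXm n)] at hI
    rw [measureReal_def] at hI
    linarith
  have hPB' : P B ≤ ENNReal.ofReal (η / 2) :=
    (ENNReal.le_ofReal_iff_toReal_le (measure_ne_top P B) (by linarith)).mpr hPB
  -- combine
  calc P E ≤ P (A ∪ B) := measure_mono hsub
    _ ≤ P A + P B := measure_union_le A B
    _ ≤ ENNReal.ofReal (η / 2) + ENNReal.ofReal (η / 2) := add_le_add hPA' hPB'
    _ = ENNReal.ofReal η := by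
        rw [← ENNReal.ofReal_add (by linarith) (by linarith)]; ring_nf
    _ = e := ENNReal.ofReal_toReal heT
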